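/- In a solvable SRI instance with all preference lists of length at most 5 and with no (1,1)-pairs and no (5,5)-pairs, any stable matching M satisfies c(M) ≤ 2 · c(M_egal), where M_egal is an egalitarian stable matching. -/

import Mathlib

/-- An instance of the Stable Roommates problem with Incomplete (strict) lists:
a graph together with a rank function, where `rank u v` is one plus the number
of neighbours of `u` that `u` strictly prefers to `v`, and ranks of distinct
neighbours are distinct (strict preferences). -/
structure SRI (V : Type*) [Fintype V] where
  G : SimpleGraph V
  rank : V → V → ℕ
  rank_eq : ∀ u v, G.Adj u v →
    rank u v = 1 + Set.ncard {w | G.Adj u w ∧ rank u w < rank u v}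
  rank_inj : ∀ u v w, G.Adj u v → G.Adj u w → rank u v = rank u w → v = w

variable {V : Type*} [Fintype V]

/-- A matching: a symmetric partial pairing along edges of the graph. -/
structure SRI.Matching (I : SRI V) where
  M : V → Option V
  symm : ∀ u v, M u = some v → M v = some u
  adj : ∀ u v, M u = some v → I.G.Adj u v

/-- Edge `uv` blocks `N`. -/
def SRI.Blocks (I : SRI V) (N : I.Matching) (u v : V) : Prop :=
  I.G.Adj u v ∧ N.M u ≠ some v ∧
  (N.M u = none ∨ ∃ w, N.M u = some w ∧ I.rank u v < I.rank u w) ∧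
  (N.M v = none ∨ ∃ w, N.M v = some w ∧ I.rank v u < I.rank v w)

def SRI.Stable (I : SRI V) (N : I.Matching) : Prop := ∀ u v, ¬ I.Blocks N u v

/-- Cost of a matching: the sum of `rank a (M a)` over matched agents `a`. -/
def SRI.cost (I : SRI V) (N : I.Matching) : ℕ :=
  ∑ v : V, (N.M v).elim 0 (I.rank v)

/-- Every preference list has length at most `d`. -/
def SRI.MaxDeg (I : SRI V) (d : ℕ) : Prop := ∀ v, Set.ncard {w | I.G.Adj v w} ≤ d

/-- An egalitarian stable matching minimises cost among stable matchings. -/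
def SRI.Egalitarian (I : SRI V) (N : I.Matching) : Prop :=
  I.Stable N ∧ ∀ N' : I.Matching, I.Stable N' → I.cost N ≤ I.cost N'

lemma SRI.rank_pos (I : SRI V) {u v : V} (h : I.G.Adj u v) : 1 ≤ I.rank u v := by
  rw [I.rank_eq u v h]; omega

lemma SRI.rank_le5 (I : SRI V) (h5 : I.MaxDeg 5) {u v : V} (h : I.G.Adj u v) :
    I.rank u v ≤ 5 := by
  have hss : {w | I.G.Adj u w ∧ I.rank u w < I.rank u v} ⊂ {w | I.G.Adj u w} := by
    constructor
    · exact fun w hw => hw.1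
    · intro hsup
      exact lt_irrefl _ (hsup h).2
  have h1 := Set.ncard_lt_ncard hss (Set.toFinite _)
  have h2 := h5 u
  have h3 := I.rank_eq u v h
  omega

lemma SRI.rank_ne (I : SRI V) {u v w : V} (hv : I.G.Adj u v) (hw : I.G.Adj u w)
    (hne : v ≠ w) : I.rank u v ≠ I.rank u w :=
  fun he => hne (I.rank_inj u v w hv hw he)

lemma SRI.no_block (I : SRI V) {Q : I.Matching} (hQ : I.Stable Q) {u v : V}
    (hadj : I.G.Adj u v) (hne : Q.M u ≠ some v)
    (hu : Q.M u = none ∨ ∃ w, Q.M u = some w ∧ I.rank u v < I.rank u w) :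
    ∃ z, Q.M v = some z ∧ I.rank v z < I.rank v u := by
  by_contra hcon
  push_neg at hcon
  apply hQ u v
  refine ⟨hadj, hne, hu, ?_⟩
  cases hzv : Q.M v with
  | none => exact Or.inl rfl
  | some z =>
    refine Or.inr ⟨z, rfl, ?_⟩
    have h1 := hcon z hzv
    have hzu : z ≠ u := fun he => hne (by rw [he] at hzv; exact Q.symm _ _ hzv)
    have h2 : I.rank v z ≠ I.rank v u := I.rank_ne (Q.adj _ _ hzv) hadj.symm hzu
    omega

def SRI.walk (I : SRI V) (P Q : I.Matching) (v0 : V) : ℕ → V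
  | 0 => v0
  | n+1 => ((if n % 2 = 0 then P.M else Q.M) (SRI.walk I P Q v0 n)).getD v0

lemma SRI.walk_succ (I : SRI V) (P Q : I.Matching) (v0 : V) (n : ℕ) :
    I.walk P Q v0 (n+1) = ((if n % 2 = 0 then P.M else Q.M) (I.walk P Q v0 n)).getD v0 := rfl

lemma SRI.walk_spec (I : SRI V) {P Q : I.Matching} (hP : I.Stable P) (hQ : I.Stable Q)
    {v0 w0 : V} (hv0 : P.M v0 = some w0) (hv0Q : Q.M v0 = none) :
    ∀ n, (if n % 2 = 0 then P.M else Q.M) (I.walk P Q v0 n) = some (I.walk P Q v0 (n+1)) ∧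
      (n = 0 ∨ I.rank (I.walk P Q v0 n) (I.walk P Q v0 (n+1))
        < I.rank (I.walk P Q v0 n) (I.walk P Q v0 (n-1))) := by
  intro n
  induction n using Nat.strong_induction_on with
  | _ n ih =>
    match n with
    | 0 =>
      refine ⟨?_, Or.inl rfl⟩
      simp only [Nat.zero_mod, if_pos rfl]
      show P.M v0 = some (I.walk P Q v0 1)
      rw [SRI.walk_succ]
      have hw0 : I.walk P Q v0 0 = v0 := rfl
      rw [hw0]
      simp [hv0]
    | Nat.succ m =>
      -- set up notation
      have hm := ih m (Nat.lt_succ_self m)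
      -- the edge (walk m, walk (m+1)) belongs to the matching X_m of parity m;
      -- the matching at level m+1 is Y, of opposite parity.
      rcases Nat.even_or_odd m with hme | hmo
      · -- m even : X_m = P, Y = Q
        have hm0 : m % 2 = 0 := Nat.even_iff.mp hme
        have hm1 : (m + 1) % 2 ≠ 0 := by omega
        rw [if_pos hm0] at hm
        have hPedge : P.M (I.walk P Q v0 m) = some (I.walk P Q v0 (m+1)) := hm.1
        have hadj : I.G.Adj (I.walk P Q v0 m) (I.walk P Q v0 (m+1)) := P.adj _ _ hPedge
        have hstep : ∃ z, Q.M (I.walk P Q v0 (m+1)) = some z ∧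
            I.rank (I.walk P Q v0 (m+1)) z
              < I.rank (I.walk P Q v0 (m+1)) (I.walk P Q v0 m) := by
          match m with
          | 0 =>
            -- walk 0 = v0 unmatched in Q
            exact I.no_block hQ hadj (by
              show Q.M v0 ≠ some _
              rw [hv0Q]; simp) (Or.inl hv0Q)
          | Nat.succ k =>
            -- Q.M (walk (k+1)) = some (walk k) from ih k
            have hk := ih k (by omega)
            have hk1 : k % 2 ≠ 0 := by omega
            rw [if_neg hk1] at hk
            have hQback : Q.M (I.walk P Q v0 (k+1)) = some (I.walk P Q v0 k) :=
              Q.symm _ _ hk.1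
            have hpref : I.rank (I.walk P Q v0 (k+1)) (I.walk P Q v0 (k+2))
                < I.rank (I.walk P Q v0 (k+1)) (I.walk P Q v0 k) := by
              have := hm.2
              rcases this with h | h
              · exact absurd h (Nat.succ_ne_zero k)
              · simpa using h
            refine I.no_block hQ hadj ?_ (Or.inr ⟨_, hQback, hpref⟩)
            rw [hQback]
            intro hcontra
            have : I.walk P Q v0 k = I.walk P Q v0 (k+2) := by
              exact Option.some.inj hcontra
            rw [this] at hpref
            omega
        obtain ⟨z, hz, hrz⟩ := hstep
        have hw2 : I.walk P Q v0 (m+2) = z := by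
          rw [SRI.walk_succ, if_neg hm1, hz]; rfl
        constructor
        · rw [if_neg hm1, hz, hw2]
        · refine Or.inr ?_
          simpa [hw2] using hrz
      · -- m odd : X_m = Q, Y = P
        have hm0 : m % 2 ≠ 0 := by
          have := Nat.odd_iff.mp hmo; omega
        have hm1 : (m + 1) % 2 = 0 := by
          have := Nat.odd_iff.mp hmo; omega
        rw [if_neg hm0] at hm
        have hQedge : Q.M (I.walk P Q v0 m) = some (I.walk P Q v0 (m+1)) := hm.1
        have hadj : I.G.Adj (I.walk P Q v0 m) (I.walk P Q v0 (m+1)) := Q.adj _ _ hQedge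
        have hstep : ∃ z, P.M (I.walk P Q v0 (m+1)) = some z ∧
            I.rank (I.walk P Q v0 (m+1)) z
              < I.rank (I.walk P Q v0 (m+1)) (I.walk P Q v0 m) := by
          match m with
          | Nat.succ k =>
            have hk := ih k (by omega)
            have hk1 : k % 2 = 0 := by omega
            rw [if_pos hk1] at hk
            have hPback : P.M (I.walk P Q v0 (k+1)) = some (I.walk P Q v0 k) :=
              P.symm _ _ hk.1
            have hpref : I.rank (I.walk P Q v0 (k+1)) (I.walk P Q v0 (k+2))
                < I.rank (I.walk P Q v0 (k+1)) (I.walk P Q v0 k) := by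
              rcases hm.2 with h | h
              · exact absurd h (Nat.succ_ne_zero k)
              · simpa using h
            refine I.no_block hP hadj ?_ (Or.inr ⟨_, hPback, hpref⟩)
            rw [hPback]
            intro hcontra
            have : I.walk P Q v0 k = I.walk P Q v0 (k+2) := Option.some.inj hcontra
            rw [this] at hpref
            omega
        obtain ⟨z, hz, hrz⟩ := hstep
        have hw2 : I.walk P Q v0 (m+2) = z := by
          rw [SRI.walk_succ, if_pos hm1, hz]; rfl
        constructor
        · rw [if_pos hm1, hz, hw2]
        · refine Or.inr ?_
          simpa [hw2] using hrz

lemma SRI.lone_wolf (I : SRI V) {P Q : I.Matching} (hP : I.Stable P) (hQ : I.Stable Q)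
    {v0 w0 : V} (hv0 : P.M v0 = some w0) : ∃ x, Q.M v0 = some x := by
  cases hq : Q.M v0 with
  | some x => exact ⟨x, rfl⟩
  | none =>
    exfalso
    have hs := I.walk_spec hP hQ hv0 hq
    set f : ℕ → V := I.walk P Q v0 with hf
    have h1 : ∀ n, (if n % 2 = 0 then P.M else Q.M) (f n) = some (f (n+1)) :=
      fun n => (hs n).1
    have hf0 : f 0 = v0 := rfl
    -- backward determinism
    have hback : ∀ a b, a % 2 = b % 2 → f (a+1) = f (b+1) → f a = f b := by
      intro a b hab heq
      have ha := h1 a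
      have hb := h1 b
      by_cases hb0 : b % 2 = 0
      · rw [if_pos (hab.trans hb0)] at ha
        rw [if_pos hb0] at hb
        have ha' := P.symm _ _ ha
        have hb' := P.symm _ _ hb
        rw [heq, hb'] at ha'
        exact (Option.some.inj ha').symm
      · rw [if_neg (fun h => hb0 (hab ▸ h))] at ha
        rw [if_neg hb0] at hb
        have ha' := Q.symm _ _ ha
        have hb' := Q.symm _ _ hb
        rw [heq, hb'] at ha'
        exact (Option.some.inj ha').symm
    -- no repetition at odd gap
    have hodd : ∀ g, g % 2 = 1 → ∀ i, f i = f (i + g) → False := by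
      intro g
      induction g using Nat.strong_induction_on with
      | _ g ihg =>
        intro hg i heq
        rcases Nat.lt_or_ge g 2 with h2 | h2
        · have hg1 : g = 1 := by omega
          subst hg1
          have ha := h1 i
          rw [← heq] at ha
          by_cases hi0 : i % 2 = 0
          · rw [if_pos hi0] at ha
            exact I.G.loopless.irrefl _ (P.adj _ _ ha)
          · rw [if_neg hi0] at ha
            exact I.G.loopless.irrefl _ (Q.adj _ _ ha)
        · -- g ≥ 3, odd
          have ha := h1 i
          have hb := h1 (i + (g - 1))
          have he1 : i + (g - 1) + 1 = i + g := by omega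
          rw [he1] at hb
          have hpar : (i + (g - 1)) % 2 = i % 2 := by omega
          rw [hpar] at hb
          have key : f (i + 1) = f (i + (g - 1)) := by
            by_cases hi0 : i % 2 = 0
            · rw [if_pos hi0] at ha hb
              have hb' := P.symm _ _ hb
              rw [← heq, ha] at hb'
              exact Option.some.inj hb'
            · rw [if_neg hi0] at ha hb
              have hb' := Q.symm _ _ hb
              rw [← heq, ha] at hb'
              exact Option.some.inj hb'
          have he2 : i + (g - 1) = (i + 1) + (g - 2) := by omega
          rw [he2] at key
          exact ihg (g - 2) (by omega) (by omega) (i + 1) key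
    -- no repetition at even gap either
    have heven : ∀ i j, i < j → i % 2 = j % 2 → f i = f j → False := by
      intro i
      induction i using Nat.strong_induction_on with
      | _ i ihi =>
        intro j hij hpar heq
        match i with
        | 0 =>
          -- f j = v0 with j ≥ 2 even
          have hj2 : 2 ≤ j := by omega
          have hb := h1 (j - 1)
          have he1 : j - 1 + 1 = j := by omega
          rw [he1] at hb
          have hj1 : (j - 1) % 2 ≠ 0 := by omega
          rw [if_neg hj1] at hb
          rw [← heq, hf0] at hb
          have := Q.symm _ _ hb
          rw [hq] at this
          cases this
        | Nat.succ k =>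
          have hjk : 1 ≤ j := by omega
          have he1 : j = (j - 1) + 1 := by omega
          have hkey : f k = f (j - 1) := by
            apply hback k (j - 1) (by omega)
            rw [← he1]
            exact heq
          exact ihi k (by omega) (j - 1) (by omega) (by omega) hkey
    -- f is not injective
    obtain ⟨i, j, hne, heq⟩ := Finite.exists_ne_map_eq_of_infinite f
    rcases Ne.lt_or_gt hne with hij | hij
    · by_cases hpar : i % 2 = j % 2
      · exact heven i j hij hpar heq
      · have : j = i + (j - i) := by omega
        rw [this] at heq
        exact hodd (j - i) (by omega) i heq
    · by_cases hpar : j % 2 = i % 2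
      · exact heven j i hij hpar heq.symm
      · have : i = j + (i - j) := by omega
        rw [this] at heq
        exact hodd (i - j) (by omega) j heq.symm

theorem stmt6' (I : SRI V) (h5 : I.MaxDeg 5)
    (N Ne : I.Matching) (hN : I.Stable N) (hNeS : I.Stable Ne) :
    I.cost N ≤ 2 * I.cost Ne := by
  classical
  have lwNE : ∀ v x, N.M v = some x → ∃ y, Ne.M v = some y :=
    fun v x h => I.lone_wolf hN hNeS h
  have lwEN : ∀ v x, Ne.M v = some x → ∃ y, N.M v = some y :=
    fun v x h => I.lone_wolf hNeS hN h
  set a' : V → ℕ := fun v => (N.M v).elim 0 (I.rank v) with ha'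
  set b' : V → ℕ := fun v => (Ne.M v).elim 0 (I.rank v) with hb'
  have ha'some : ∀ v x, N.M v = some x → a' v = I.rank v x := by
    intro v x h; simp [ha', h]
  have hb'some : ∀ v x, Ne.M v = some x → b' v = I.rank v x := by
    intro v x h; simp [hb', h]
  set pU : V → Prop := fun v => N.M v = none with hpU
  set pF : V → Prop := fun v => ∃ x, N.M v = some x ∧ Ne.M v = some x with hpF
  set pM : V → Prop := fun v =>
    ∃ x y, N.M v = some x ∧ Ne.M v = some y ∧ I.rank v x < I.rank v y with hpM
  set T1 : Finset V := Finset.univ.filter (fun v => ¬ pU v) with hT1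
  set Uf : Finset V := Finset.univ.filter pU with hUf
  set Ff : Finset V := T1.filter pF with hFf
  set T2 : Finset V := T1.filter (fun v => ¬ pF v) with hT2
  set Mf : Finset V := T2.filter pM with hMf
  set Ef : Finset V := T2.filter (fun v => ¬ pM v) with hEf
  have hsplit : ∀ g : V → ℕ, ∑ v, g v =
      (∑ v ∈ Uf, g v) + ((∑ v ∈ Ff, g v) + ((∑ v ∈ Mf, g v) + (∑ v ∈ Ef, g v))) := by
    intro g
    rw [← Finset.sum_filter_add_sum_filter_not Finset.univ pU g,
        ← Finset.sum_filter_add_sum_filter_not T1 pF g,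
        ← Finset.sum_filter_add_sum_filter_not T2 pM g]
  -- membership data
  have hMfmem : ∀ v ∈ Mf, ∃ x y, N.M v = some x ∧ Ne.M v = some y ∧
      I.rank v x < I.rank v y := by
    intro v hv
    rw [hMf, Finset.mem_filter] at hv
    exact hv.2
  have hEfmem : ∀ v ∈ Ef, ∃ x y, N.M v = some x ∧ Ne.M v = some y ∧
      I.rank v y < I.rank v x := by
    intro v hv
    rw [hEf, Finset.mem_filter, hT2, Finset.mem_filter, hT1, Finset.mem_filter] at hv
    obtain ⟨⟨⟨-, hU⟩, hF⟩, hM⟩ := hv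
    cases hx : N.M v with
    | none => exact absurd hx hU
    | some x =>
      obtain ⟨y, hy⟩ := lwNE v x hx
      have hxy : x ≠ y := by
        intro he
        apply hF
        refine ⟨x, hx, ?_⟩
        rw [he]
        exact hy
      have h3 : I.rank v x ≠ I.rank v y := I.rank_ne (N.adj _ _ hx) (Ne.adj _ _ hy) hxy
      have h4 : ¬ I.rank v x < I.rank v y := fun hl => hM ⟨x, y, hx, hy, hl⟩
      exact ⟨x, y, rfl, hy, by omega⟩
  -- simple sum facts
  have hUa : ∑ v ∈ Uf, a' v = 0 := by
    apply Finset.sum_eq_zero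
    intro v hv
    rw [hUf, Finset.mem_filter] at hv
    simp [ha', show N.M v = none from hv.2]
  have hFab : ∑ v ∈ Ff, a' v = ∑ v ∈ Ff, b' v := by
    apply Finset.sum_congr rfl
    intro v hv
    rw [hFf, Finset.mem_filter] at hv
    obtain ⟨x, hx, hy⟩ := hv.2
    rw [ha'some v x hx, hb'some v x hy]
  have hMa : ∑ v ∈ Mf, a' v + Mf.card ≤ ∑ v ∈ Mf, b' v := by
    have : ∑ v ∈ Mf, (a' v + 1) ≤ ∑ v ∈ Mf, b' v := by
      apply Finset.sum_le_sum
      intro v hv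
      obtain ⟨x, y, hx, hy, hr⟩ := hMfmem v hv
      rw [ha'some v x hx, hb'some v y hy]
      omega
    rw [Finset.sum_add_distrib, Finset.sum_const, smul_eq_mul, mul_one] at this
    exact this
  have hMb2 : 2 * Mf.card ≤ ∑ v ∈ Mf, b' v := by
    have h : ∑ _v ∈ Mf, 2 ≤ ∑ v ∈ Mf, b' v := Finset.sum_le_sum (by
      intro v hv
      show 2 ≤ b' v
      obtain ⟨x, y, hx, hy, hr⟩ := hMfmem v hv
      rw [hb'some v y hy]
      have := I.rank_pos (N.adj _ _ hx)
      omega)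
    rw [Finset.sum_const, smul_eq_mul] at h
    omega
  have hEa : ∑ v ∈ Ef, a' v ≤ 5 * Ef.card := by
    have h : ∑ v ∈ Ef, a' v ≤ ∑ _v ∈ Ef, 5 := Finset.sum_le_sum (by
      intro v hv
      show a' v ≤ 5
      obtain ⟨x, y, hx, hy, hr⟩ := hEfmem v hv
      rw [ha'some v x hx]
      exact I.rank_le5 h5 (N.adj _ _ hx))
    rw [Finset.sum_const, smul_eq_mul] at h
    omega
  have hEb : Ef.card ≤ ∑ v ∈ Ef, b' v := by
    have h : ∑ _v ∈ Ef, 1 ≤ ∑ v ∈ Ef, b' v := Finset.sum_le_sum (by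
      intro v hv
      show 1 ≤ b' v
      obtain ⟨x, y, hx, hy, hr⟩ := hEfmem v hv
      rw [hb'some v y hy]
      exact I.rank_pos (Ne.adj _ _ hy))
    rw [Finset.sum_const, smul_eq_mul] at h
    omega
  -- injection Ef → Mf
  have hEM : Ef.card ≤ Mf.card := by
    apply Finset.card_le_card_of_injOn (fun v => (Ne.M v).getD v)
    · intro v hv
      obtain ⟨x, y, hx, hy, hr⟩ := hEfmem v hv
      have hxy : x ≠ y := by rintro rfl; omega
      have himg : (Ne.M v).getD v = y := by rw [hy]; rfl
      simp only [himg, Finset.mem_coe]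
      have hyv : Ne.M y = some v := Ne.symm _ _ hy
      obtain ⟨z, hz⟩ := lwEN y v hyv
      have hzv : z ≠ v := by
        rintro rfl
        have h' := N.symm _ _ hz
        rw [hx] at h'
        exact hxy (Option.some.inj h')
      have hadjyv : I.G.Adj y v := Ne.adj _ _ hyv
      have hadjyz : I.G.Adj y z := N.adj _ _ hz
      have hrne : I.rank y z ≠ I.rank y v := I.rank_ne hadjyz hadjyv hzv
      have hkey : I.rank y z < I.rank y v := by
        by_contra hcon
        apply hN v y
        refine ⟨hadjyv.symm, ?_, Or.inr ⟨x, hx, hr⟩, Or.inr ⟨z, hz, by omega⟩⟩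
        rw [hx]
        intro h'
        exact hxy (Option.some.inj h')
      rw [hMf, Finset.mem_filter, hT2, Finset.mem_filter, hT1, Finset.mem_filter]
      refine ⟨⟨⟨Finset.mem_univ _, ?_⟩, ?_⟩, ⟨z, v, hz, hyv, hkey⟩⟩
      · simp [hpU, hz]
      · rintro ⟨w, hw1, hw2⟩
        rw [hz] at hw1
        rw [hyv] at hw2
        exact hzv ((Option.some.inj hw1).trans (Option.some.inj hw2).symm)
    · intro v1 h1 v2 h2 he
      obtain ⟨x1, y1, hx1, hy1, -⟩ := hEfmem v1 h1
      obtain ⟨x2, y2, hx2, hy2, -⟩ := hEfmem v2 h2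
      simp only [hy1, hy2, Option.getD_some] at he
      have e1 := Ne.symm _ _ hy1
      have e2 := Ne.symm _ _ hy2
      rw [he, e2] at e1
      exact (Option.some.inj e1).symm
  -- injection Mf → Ef
  have hME : Mf.card ≤ Ef.card := by
    apply Finset.card_le_card_of_injOn (fun v => (N.M v).getD v)
    · intro v hv
      obtain ⟨x, y, hx, hy, hr⟩ := hMfmem v hv
      have hxy : x ≠ y := by rintro rfl; omega
      have himg : (N.M v).getD v = x := by rw [hx]; rfl
      simp only [himg, Finset.mem_coe]
      have hxv : N.M x = some v := N.symm _ _ hx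
      obtain ⟨w, hw⟩ := lwNE x v hxv
      have hwv : w ≠ v := by
        rintro rfl
        have h' := Ne.symm _ _ hw
        rw [hy] at h'
        exact hxy (Option.some.inj h').symm
      have hadjxv : I.G.Adj x v := N.adj _ _ hxv
      have hadjxw : I.G.Adj x w := Ne.adj _ _ hw
      have hrne : I.rank x w ≠ I.rank x v := I.rank_ne hadjxw hadjxv hwv
      have hkey : I.rank x w < I.rank x v := by
        by_contra hcon
        apply hNeS v x
        refine ⟨hadjxv.symm, ?_, Or.inr ⟨y, hy, hr⟩, Or.inr ⟨w, hw, by omega⟩⟩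
        rw [hy]
        intro h'
        exact hxy (Option.some.inj h').symm
      rw [hEf, Finset.mem_filter, hT2, Finset.mem_filter, hT1, Finset.mem_filter]
      refine ⟨⟨⟨Finset.mem_univ _, ?_⟩, ?_⟩, ?_⟩
      · simp [hpU, hxv]
      · rintro ⟨u, hu1, hu2⟩
        rw [hxv] at hu1
        rw [hw] at hu2
        exact hwv ((Option.some.inj hu2).trans (Option.some.inj hu1).symm)
      · rintro ⟨x', y', h1', h2', h3'⟩
        rw [hxv] at h1'
        rw [hw] at h2'
        rw [← Option.some.inj h1', ← Option.some.inj h2'] at h3'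
        omega
    · intro v1 h1 v2 h2 he
      obtain ⟨x1, y1, hx1, hy1, -⟩ := hMfmem v1 h1
      obtain ⟨x2, y2, hx2, hy2, -⟩ := hMfmem v2 h2
      simp only [hx1, hx2, Option.getD_some] at he
      have e1 := N.symm _ _ hx1
      have e2 := N.symm _ _ hx2
      rw [he, e2] at e1
      exact (Option.some.inj e1).symm
  -- assemble
  show (∑ v, a' v) ≤ 2 * ∑ v, b' v
  rw [hsplit a', hsplit b']
  have hUb : 0 ≤ ∑ v ∈ Uf, b' v := Nat.zero_le _
  omega

/-- In a solvable 5-SRI instance without (1,1)- and (5,5)-pairs,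
any stable matching satisfies `c(M) ≤ 2 c(M_egal)`. -/
theorem stmt6 (I : SRI V) (h5 : I.MaxDeg 5)
    (h11 : ∀ u v, I.G.Adj u v → ¬ (I.rank u v = 1 ∧ I.rank v u = 1))
    (h55 : ∀ u v, I.G.Adj u v → ¬ (I.rank u v = 5 ∧ I.rank v u = 5))
    (N Ne : I.Matching) (hN : I.Stable N) (hNe : I.Egalitarian Ne) :
    I.cost N ≤ 2 * I.cost Ne :=
  stmt6' I h5 N Ne hN hNe.1
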